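/- Let G be a planar grid diagram of size n with O-markings O. Suppose grid states x and y (viewed as permutations of {0,…,n−1}) agree in all columns except i < j, where x(i) = a < b = x(j), y(i) = b, y(j) = a. Let r = [i,j] × [a,b] be the rectangle with southwest corner (i,a) and northeast corner (j,b). Then M_O(x) − M_O(y) = 1 − 2·#(O ∩ r) + 2·#(x ∩ Int r), where #(O ∩ r) is the number of O-markings whose center lies in the interior of r and #(x ∩ Int r) is the number of components of x lying in the open rectangle (i,j) × (a,b). -/

import Mathlib

open Finset

/-- `Ipairs A B` counts pairs `(a,b) ∈ A × B` with `b` strictly to the northeast of `a`. -/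
def Ipairs (A B : Finset (ℤ × ℤ)) : ℕ :=
  ((A ×ˢ B).filter (fun p => p.1.1 < p.2.1 ∧ p.1.2 < p.2.2)).card

/-- The symmetrization `J(A,B) = (I(A,B) + I(B,A))/2`. -/
def Jsym (A B : Finset (ℤ × ℤ)) : ℚ :=
  ((Ipairs A B : ℚ) + (Ipairs B A : ℚ)) / 2

/-- A grid state `x` (a permutation of `{0,…,n−1}`) as a planar point set,
in doubled coordinates: component of column `i` is `(2i, 2x(i))`. -/
def stateSet {n : ℕ} (x : Equiv.Perm (Fin n)) : Finset (ℤ × ℤ) :=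
  Finset.univ.image (fun i : Fin n => (2 * (i : ℤ), 2 * ((x i : ℕ) : ℤ)))

/-- The markings of a grid diagram encoded by a permutation `σ`, in doubled
coordinates: the marking of column `i` has center `(2i+1, 2σ(i)+1)`. -/
def markSet {n : ℕ} (σ : Equiv.Perm (Fin n)) : Finset (ℤ × ℤ) :=
  Finset.univ.image (fun i : Fin n => (2 * (i : ℤ) + 1, 2 * ((σ i : ℕ) : ℤ) + 1))

/-- The Maslov grading `M_O(x) = J(x,x) − 2J(x,O) + J(O,O) + 1`. -/
def maslov {n : ℕ} (σO : Equiv.Perm (Fin n)) (x : Equiv.Perm (Fin n)) : ℚ :=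
  Jsym (stateSet x) (stateSet x) - 2 * Jsym (stateSet x) (markSet σO)
    + Jsym (markSet σO) (markSet σO) + 1

/- ===== auxiliary material ===== -/

lemma Ipairs_image {n : ℕ} (f g : Fin n → ℤ × ℤ)
    (hf : Function.Injective f) (hg : Function.Injective g) :
    Ipairs (Finset.univ.image f) (Finset.univ.image g) =
      (Finset.univ.filter (fun p : Fin n × Fin n =>
        (f p.1).1 < (g p.2).1 ∧ (f p.1).2 < (g p.2).2)).card := by
  classical
  unfold Ipairs
  have hprod : (Finset.univ.image f) ×ˢ (Finset.univ.image g)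
      = Finset.univ.image (fun p : Fin n × Fin n => (f p.1, g p.2)) := by
    ext ⟨u, v⟩
    simp only [Finset.mem_product, Finset.mem_image, Finset.mem_univ, true_and,
      Prod.ext_iff, Prod.exists]
    constructor
    · rintro ⟨⟨k, hk⟩, ⟨l, hl⟩⟩; exact ⟨k, l, hk, hl⟩
    · rintro ⟨k, l, hk, hl⟩; exact ⟨⟨k, hk⟩, ⟨l, hl⟩⟩
  rw [hprod, Finset.filter_image, Finset.card_image_of_injective]
  intro p q h
  have h1 := hf (congrArg Prod.fst h)
  have h2 := hg (congrArg Prod.snd h)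
  exact Prod.ext_iff.mpr ⟨h1, h2⟩

lemma card_filter_int {α : Type*} [Fintype α] (p : α → Prop) [DecidablePred p] :
    (((Finset.univ.filter p)).card : ℤ) = ∑ a : α, if p a then (1:ℤ) else 0 := by
  rw [Finset.card_filter]
  push_cast
  rfl

lemma state_inj {n : ℕ} (x : Equiv.Perm (Fin n)) :
    Function.Injective (fun i : Fin n => ((2 * (i : ℤ), 2 * ((x i : ℕ) : ℤ)) : ℤ × ℤ)) := by
  intro k l h
  have h1 : 2 * ((k : ℕ) : ℤ) = 2 * ((l : ℕ) : ℤ) := congrArg Prod.fst h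
  exact Fin.ext (by omega)

lemma mark_inj {n : ℕ} (σ : Equiv.Perm (Fin n)) :
    Function.Injective (fun i : Fin n => ((2 * (i : ℤ) + 1, 2 * ((σ i : ℕ) : ℤ) + 1) : ℤ × ℤ)) := by
  intro k l h
  have h1 : 2 * ((k : ℕ) : ℤ) + 1 = 2 * ((l : ℕ) : ℤ) + 1 := congrArg Prod.fst h
  exact Fin.ext (by omega)

/-- `N(x)` : number of pairs `k < l` with `x k < x l`, as an integer. -/
def NNc {n : ℕ} (x : Equiv.Perm (Fin n)) : ℤ :=
  ∑ k : Fin n, ∑ l : Fin n, if k < l ∧ x k < x l then (1:ℤ) else 0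

def AAc {n : ℕ} (σ x : Equiv.Perm (Fin n)) : ℤ :=
  ∑ l : Fin n, ∑ k : Fin n, if k ≤ l ∧ x k ≤ σ l then (1:ℤ) else 0

def BBc {n : ℕ} (σ x : Equiv.Perm (Fin n)) : ℤ :=
  ∑ k : Fin n, ∑ l : Fin n, if k < l ∧ σ k < x l then (1:ℤ) else 0

lemma bridgeN {n : ℕ} (x : Equiv.Perm (Fin n)) :
    (Ipairs (stateSet x) (stateSet x) : ℤ) = NNc x := by
  rw [stateSet, Ipairs_image _ _ (state_inj x) (state_inj x), card_filter_int]
  rw [← Finset.univ_product_univ, Finset.sum_product]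
  refine Finset.sum_congr rfl fun k _ => Finset.sum_congr rfl fun l _ => if_congr ?_ rfl rfl
  simp only [Fin.lt_def]
  omega

lemma bridgeA {n : ℕ} (σ x : Equiv.Perm (Fin n)) :
    (Ipairs (stateSet x) (markSet σ) : ℤ) = AAc σ x := by
  rw [stateSet, markSet, Ipairs_image _ _ (state_inj x) (mark_inj σ), card_filter_int]
  rw [← Finset.univ_product_univ, Finset.sum_product, Finset.sum_comm]
  refine Finset.sum_congr rfl fun l _ => Finset.sum_congr rfl fun k _ => if_congr ?_ rfl rfl
  simp only [Fin.le_def]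
  omega

lemma bridgeB {n : ℕ} (σ x : Equiv.Perm (Fin n)) :
    (Ipairs (markSet σ) (stateSet x) : ℤ) = BBc σ x := by
  rw [stateSet, markSet, Ipairs_image _ _ (mark_inj σ) (state_inj x), card_filter_int]
  rw [← Finset.univ_product_univ, Finset.sum_product]
  refine Finset.sum_congr rfl fun k _ => Finset.sum_congr rfl fun l _ => if_congr ?_ rfl rfl
  simp only [Fin.lt_def]
  omega

lemma sum_eq_pair {α M : Type*} [Fintype α] [DecidableEq α] [AddCommGroup M]
    (i j : α) (hij : i ≠ j) (g : α → M) (h : ∀ k, k ≠ i → k ≠ j → g k = 0) :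
    ∑ k, g k = g i + g j := by
  rw [← Finset.sum_pair hij]
  apply (Finset.sum_subset (Finset.subset_univ _) ?_).symm
  intro k _ hk
  simp only [Finset.mem_insert, Finset.mem_singleton, not_or] at hk
  exact h k hk.1 hk.2

lemma sum_cross {α M : Type*} [Fintype α] [DecidableEq α] [AddCommGroup M]
    (i j : α) (hij : i ≠ j) (G : α → α → M)
    (h : ∀ k l, k ≠ i → k ≠ j → l ≠ i → l ≠ j → G k l = 0) :
    ∑ k, ∑ l, G k l
      = ∑ l, (G i l + G j l + G l i + G l j) - (G i i + G i j + (G j i + G j j)) := by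
  have hrow : ∀ k, k ≠ i → k ≠ j → ∑ l, G k l = G k i + G k j := fun k h1 h2 =>
    sum_eq_pair i j hij _ (fun l h3 h4 => h k l h1 h2 h3 h4)
  have step1 : ∑ k, ∑ l, G k l
      = ∑ k, ((∑ l, G k l) - (G k i + G k j)) + ∑ k, (G k i + G k j) := by
    rw [← Finset.sum_add_distrib]
    refine Finset.sum_congr rfl fun k _ => by abel
  rw [step1, sum_eq_pair i j hij (fun k => (∑ l, G k l) - (G k i + G k j))
    (fun k h1 h2 => by rw [hrow k h1 h2]; abel)]
  have e2 : ∑ l : α, (G i l + G j l + G l i + G l j)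
      = ∑ l : α, G i l + (∑ l : α, G j l + ∑ l : α, (G l i + G l j)) := by
    rw [← Finset.sum_add_distrib, ← Finset.sum_add_distrib]
    refine Finset.sum_congr rfl fun l _ => by abel
  rw [e2]
  abel

lemma pointA_nat (I J A B L S : ℕ) (h1 : I < J) (h2 : A < B) :
    ((if I ≤ L ∧ A ≤ S then (1:ℤ) else 0) - (if I ≤ L ∧ B ≤ S then 1 else 0))
      + ((if J ≤ L ∧ B ≤ S then 1 else 0) - (if J ≤ L ∧ A ≤ S then 1 else 0))
    = (if I ≤ L ∧ L < J ∧ A ≤ S ∧ S < B then 1 else 0) := by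
  split_ifs <;> omega

lemma pointB_nat (I J A B K S : ℕ) (h1 : I < J) (h2 : A < B) :
    ((if K < I ∧ S < A then (1:ℤ) else 0) - (if K < I ∧ S < B then 1 else 0))
      + ((if K < J ∧ S < B then 1 else 0) - (if K < J ∧ S < A then 1 else 0))
    = (if I ≤ K ∧ K < J ∧ A ≤ S ∧ S < B then 1 else 0) := by
  split_ifs <;> omega

set_option maxHeartbeats 1600000 in
lemma pointE_nat (I J A B L X Y : ℕ) (h1 : I < J) (h2 : A < B)
    (h3 : L = I → X = A ∧ Y = B) (h4 : L = J → X = B ∧ Y = A)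
    (h5 : L ≠ I → L ≠ J → X = Y) (h6 : X = A → L = I) (h7 : X = B → L = J) :
    ((if I < L ∧ A < X then (1:ℤ) else 0) - (if I < L ∧ B < Y then 1 else 0))
      + ((if J < L ∧ B < X then 1 else 0) - (if J < L ∧ A < Y then 1 else 0))
      + ((if L < I ∧ X < A then 1 else 0) - (if L < I ∧ Y < B then 1 else 0))
      + ((if L < J ∧ X < B then 1 else 0) - (if L < J ∧ Y < A then 1 else 0))
    = 2 * (if I < L ∧ L < J ∧ A < X ∧ X < B then 1 else 0)
      + (if L = I then 1 else 0) + (if L = J then 1 else 0) := by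
  rcases eq_or_ne L I with h|h
  · have hh := h3 h; subst h; obtain ⟨rfl, rfl⟩ := hh
    split_ifs <;> omega
  · rcases eq_or_ne L J with h'|h'
    · have hh := h4 h'; subst h'; obtain ⟨rfl, rfl⟩ := hh
      split_ifs <;> omega
    · have hxy := h5 h h'; subst hxy
      have h6' : X ≠ A := fun hh => h (h6 hh)
      have h7' : X ≠ B := fun hh => h' (h7 hh)
      split_ifs <;> omega

lemma pointA {n : ℕ} (i j a b l s : Fin n) (h1 : i < j) (h2 : a < b) :
    ((if i ≤ l ∧ a ≤ s then (1:ℤ) else 0) - (if i ≤ l ∧ b ≤ s then 1 else 0))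
      + ((if j ≤ l ∧ b ≤ s then 1 else 0) - (if j ≤ l ∧ a ≤ s then 1 else 0))
    = (if i ≤ l ∧ l < j ∧ a ≤ s ∧ s < b then 1 else 0) := by
  simp only [Fin.lt_def, Fin.le_def] at *
  split_ifs <;> omega

lemma pointB {n : ℕ} (i j a b k s : Fin n) (h1 : i < j) (h2 : a < b) :
    ((if k < i ∧ s < a then (1:ℤ) else 0) - (if k < i ∧ s < b then 1 else 0))
      + ((if k < j ∧ s < b then 1 else 0) - (if k < j ∧ s < a then 1 else 0))
    = (if i ≤ k ∧ k < j ∧ a ≤ s ∧ s < b then 1 else 0) := by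
  simp only [Fin.lt_def, Fin.le_def] at *
  split_ifs <;> omega

set_option maxHeartbeats 1600000 in
lemma pointE {n : ℕ} (i j a b l X Y : Fin n) (h1 : i < j) (h2 : a < b)
    (h3 : l = i → X = a ∧ Y = b) (h4 : l = j → X = b ∧ Y = a)
    (h5 : l ≠ i → l ≠ j → X = Y) (h6 : X = a → l = i) (h7 : X = b → l = j) :
    ((if i < l ∧ a < X then (1:ℤ) else 0) - (if i < l ∧ b < Y then 1 else 0))
      + ((if j < l ∧ b < X then 1 else 0) - (if j < l ∧ a < Y then 1 else 0))
      + ((if l < i ∧ X < a then 1 else 0) - (if l < i ∧ Y < b then 1 else 0))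
      + ((if l < j ∧ X < b then 1 else 0) - (if l < j ∧ Y < a then 1 else 0))
    = 2 * (if i < l ∧ l < j ∧ a < X ∧ X < b then 1 else 0)
      + (if l = i then 1 else 0) + (if l = j then 1 else 0) := by
  rcases eq_or_ne l i with h|h
  · obtain ⟨rfl, rfl⟩ := h3 h
    subst h
    simp only [Fin.lt_def, Fin.ext_iff] at *
    split_ifs <;> omega
  · rcases eq_or_ne l j with h'|h'
    · obtain ⟨rfl, rfl⟩ := h4 h'
      subst h'
      simp only [Fin.lt_def, Fin.ext_iff] at *
      split_ifs <;> omega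
    · have hxy := h5 h h'
      subst hxy
      have h6' : X ≠ a := fun hh => h (h6 hh)
      have h7' : X ≠ b := fun hh => h' (h7 hh)
      simp only [Fin.lt_def, Fin.ext_iff, Ne] at *
      split_ifs <;> omega

section Diffs
variable {n : ℕ} (σO x y : Equiv.Perm (Fin n)) (i j a b : Fin n)

lemma AAdiff (hij : i < j) (hab : a < b)
    (hxi : x i = a) (hxj : x j = b) (hyi : y i = b) (hyj : y j = a)
    (hagree : ∀ k, k ≠ i → k ≠ j → x k = y k) :
    AAc σO x - AAc σO y =
      ((Finset.univ.filter
        (fun k : Fin n => i ≤ k ∧ k < j ∧ a ≤ σO k ∧ σO k < b)).card : ℤ) := by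
  rw [card_filter_int]
  unfold AAc
  rw [← Finset.sum_sub_distrib]
  refine Finset.sum_congr rfl fun l _ => ?_
  rw [← Finset.sum_sub_distrib]
  rw [sum_eq_pair i j (ne_of_lt hij) _
    (fun k hk1 hk2 => by rw [hagree k hk1 hk2]; ring)]
  rw [hxi, hxj, hyi, hyj]
  exact pointA i j a b l (σO l) hij hab

lemma BBdiff (hij : i < j) (hab : a < b)
    (hxi : x i = a) (hxj : x j = b) (hyi : y i = b) (hyj : y j = a)
    (hagree : ∀ k, k ≠ i → k ≠ j → x k = y k) :
    BBc σO x - BBc σO y =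
      ((Finset.univ.filter
        (fun k : Fin n => i ≤ k ∧ k < j ∧ a ≤ σO k ∧ σO k < b)).card : ℤ) := by
  rw [card_filter_int]
  unfold BBc
  rw [← Finset.sum_sub_distrib]
  refine Finset.sum_congr rfl fun k _ => ?_
  rw [← Finset.sum_sub_distrib]
  rw [sum_eq_pair i j (ne_of_lt hij) _
    (fun l hl1 hl2 => by rw [hagree l hl1 hl2]; ring)]
  rw [hxi, hxj, hyi, hyj]
  exact pointB i j a b k (σO k) hij hab

lemma NNdiff (hij : i < j) (hab : a < b)
    (hxi : x i = a) (hxj : x j = b) (hyi : y i = b) (hyj : y j = a)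
    (hagree : ∀ k, k ≠ i → k ≠ j → x k = y k) :
    NNc x - NNc y = 1 + 2 * ((Finset.univ.filter
        (fun k : Fin n => i < k ∧ k < j ∧ a < x k ∧ x k < b)).card : ℤ) := by
  classical
  have hne : i ≠ j := ne_of_lt hij
  set G : Fin n → Fin n → ℤ := fun k l =>
    (if k < l ∧ x k < x l then (1:ℤ) else 0) - (if k < l ∧ y k < y l then (1:ℤ) else 0)
    with hGdef
  have hG0 : ∀ k l, k ≠ i → k ≠ j → l ≠ i → l ≠ j → G k l = 0 := by
    intro k l hk1 hk2 hl1 hl2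
    simp only [hGdef]
    rw [hagree k hk1 hk2, hagree l hl1 hl2]
    ring
  have step0 : NNc x - NNc y = ∑ k : Fin n, ∑ l : Fin n, G k l := by
    unfold NNc
    rw [← Finset.sum_sub_distrib]
    exact Finset.sum_congr rfl fun k _ => by rw [← Finset.sum_sub_distrib]
  have hpt : ∀ l : Fin n, G i l + G j l + G l i + G l j
      = 2 * (if i < l ∧ l < j ∧ a < x l ∧ x l < b then (1:ℤ) else 0)
        + ((if l = i then (1:ℤ) else 0) + (if l = j then (1:ℤ) else 0)) := by
    intro l
    have h3 : l = i → x l = a ∧ y l = b := fun h => by subst h; exact ⟨hxi, hyi⟩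
    have h4 : l = j → x l = b ∧ y l = a := fun h => by subst h; exact ⟨hxj, hyj⟩
    have h6 : x l = a → l = i := fun h => x.injective (h.trans hxi.symm)
    have h7 : x l = b → l = j := fun h => x.injective (h.trans hxj.symm)
    have hE := pointE i j a b l (x l) (y l) hij hab h3 h4 (hagree l) h6 h7
    simp only [hGdef]
    rw [hxi, hxj, hyi, hyj]
    linarith [hE]
  have hcorner : G i i + G i j + (G j i + G j j) = 1 := by
    have c1 : G i i = 0 := by simp [hGdef]
    have c2 : G j j = 0 := by simp [hGdef]
    have c3 : G j i = 0 := by simp [hGdef, show ¬ (j < i) from asymm hij]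
    have c4 : G i j = 1 := by
      simp [hGdef, hxi, hxj, hyi, hyj, hij, hab, show ¬ (b < a) from asymm hab]
    rw [c1, c2, c3, c4]
    ring
  rw [step0, sum_cross i j hne G hG0, hcorner]
  rw [Finset.sum_congr rfl (fun l _ => hpt l)]
  rw [Finset.sum_add_distrib, Finset.sum_add_distrib, ← Finset.mul_sum,
    Finset.sum_ite_eq' Finset.univ i (fun _ => (1:ℤ)),
    Finset.sum_ite_eq' Finset.univ j (fun _ => (1:ℤ)), ← card_filter_int]
  simp only [Finset.mem_univ, if_true]
  ring

end Diffs

theorem stmt2 (n : ℕ) (σO : Equiv.Perm (Fin n)) (x y : Equiv.Perm (Fin n))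
    (i j a b : Fin n) (hij : i < j) (hab : a < b)
    (hxi : x i = a) (hxj : x j = b) (hyi : y i = b) (hyj : y j = a)
    (hagree : ∀ k, k ≠ i → k ≠ j → x k = y k) :
    maslov σO x - maslov σO y =
      1 - 2 * ((Finset.univ.filter
          (fun k : Fin n => i ≤ k ∧ k < j ∧ a ≤ σO k ∧ σO k < b)).card : ℚ)
        + 2 * ((Finset.univ.filter
          (fun k : Fin n => i < k ∧ k < j ∧ a < x k ∧ x k < b)).card : ℚ) := by
  have e1 : (Ipairs (stateSet x) (stateSet x) : ℤ) - (Ipairs (stateSet y) (stateSet y) : ℤ)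
      = 1 + 2 * ((Finset.univ.filter
          (fun k : Fin n => i < k ∧ k < j ∧ a < x k ∧ x k < b)).card : ℤ) := by
    rw [bridgeN, bridgeN]
    exact NNdiff x y i j a b hij hab hxi hxj hyi hyj hagree
  have e2 : (Ipairs (stateSet x) (markSet σO) : ℤ) - (Ipairs (stateSet y) (markSet σO) : ℤ)
      = ((Finset.univ.filter
          (fun k : Fin n => i ≤ k ∧ k < j ∧ a ≤ σO k ∧ σO k < b)).card : ℤ) := by
    rw [bridgeA, bridgeA]
    exact AAdiff σO x y i j a b hij hab hxi hxj hyi hyj hagree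
  have e3 : (Ipairs (markSet σO) (stateSet x) : ℤ) - (Ipairs (markSet σO) (stateSet y) : ℤ)
      = ((Finset.univ.filter
          (fun k : Fin n => i ≤ k ∧ k < j ∧ a ≤ σO k ∧ σO k < b)).card : ℤ) := by
    rw [bridgeB, bridgeB]
    exact BBdiff σO x y i j a b hij hab hxi hxj hyi hyj hagree
  have E1 : (Ipairs (stateSet x) (stateSet x) : ℚ) - (Ipairs (stateSet y) (stateSet y) : ℚ)
      = 1 + 2 * ((Finset.univ.filter
          (fun k : Fin n => i < k ∧ k < j ∧ a < x k ∧ x k < b)).card : ℚ) := by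
    exact_mod_cast e1
  have E2 : (Ipairs (stateSet x) (markSet σO) : ℚ) - (Ipairs (stateSet y) (markSet σO) : ℚ)
      = ((Finset.univ.filter
          (fun k : Fin n => i ≤ k ∧ k < j ∧ a ≤ σO k ∧ σO k < b)).card : ℚ) := by
    exact_mod_cast e2
  have E3 : (Ipairs (markSet σO) (stateSet x) : ℚ) - (Ipairs (markSet σO) (stateSet y) : ℚ)
      = ((Finset.univ.filter
          (fun k : Fin n => i ≤ k ∧ k < j ∧ a ≤ σO k ∧ σO k < b)).card : ℚ) := by
    exact_mod_cast e3
  unfold maslov Jsym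
  linarith [E1, E2, E3]
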